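/- Let Γ be an ordered abelian group, S a final segment of Γ^{>0} such that S = {α ∈ Γ | α > H} for some proper convex subgroup H of Γ where Γ/H has no smallest positive element. Then H is the invariance group of S, i.e., H = {γ ∈ Γ | S + γ = S}. -/

import Mathlib

/-- Let `Γ` be an ordered abelian group, `H` a proper convex subgroup
such that `Γ/H` has no smallest positive element, and
`S = {α ∈ Γ | α > h for all h ∈ H}` (a final segment of `Γ^{>0}`).  Then `H` is the
invariance group of `S`, i.e. `H = {γ ∈ Γ | S + γ = S}`.

"`Γ/H` has no smallest positive element" is expressed without quotients: for every
`γ` with `γ > H` there is `δ` with `δ > H`, `δ < γ` and `γ - δ ∉ H` (so that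
`δ + H < γ + H` in `Γ/H`). -/
theorem convex_subgroup_is_invariance_group_of_upper_segment
    {Γ : Type*} [AddCommGroup Γ] [LinearOrder Γ] [IsOrderedAddMonoid Γ] (H : Set Γ)
    (hH0 : (0 : Γ) ∈ H)
    (hHadd : ∀ a ∈ H, ∀ b ∈ H, a + b ∈ H)
    (hHneg : ∀ a ∈ H, -a ∈ H)
    (hHconv : ∀ a ∈ H, ∀ b ∈ H, ∀ c : Γ, a ≤ c → c ≤ b → c ∈ H)
    (hproper : ∃ γ : Γ, γ ∉ H)
    (hnosmallest : ∀ γ : Γ, (∀ h ∈ H, h < γ) →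
        ∃ δ : Γ, (∀ h ∈ H, h < δ) ∧ δ < γ ∧ γ - δ ∉ H) :
    {γ : Γ | (fun α => α + γ) '' {α : Γ | ∀ h ∈ H, h < α} = {α : Γ | ∀ h ∈ H, h < α}}
      = H := by
  ext γ
  simp only [Set.mem_setOf_eq]
  constructor
  · intro hE
    by_contra hγ
    have hfwd : ∀ α : Γ, (∀ h ∈ H, h < α) → (∀ h ∈ H, h < α + γ) := by
      intro α hα
      have : α + γ ∈ {α : Γ | ∀ h ∈ H, h < α} := by
        rw [← hE]; exact ⟨α, hα, rfl⟩
      exact this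
    have hbwd : ∀ β : Γ, (∀ h ∈ H, h < β) → (∀ h ∈ H, h < β - γ) := by
      intro β hβ
      have hβ' : β ∈ {α : Γ | ∀ h ∈ H, h < α} := hβ
      rw [← hE] at hβ'
      obtain ⟨α, hα, hαγ⟩ := hβ'
      have : α = β - γ := eq_sub_of_add_eq hαγ
      rwa [← this]
    by_cases hpos : ∀ h ∈ H, h < γ
    · obtain ⟨δ, hδS, hδγ, -⟩ := hnosmallest γ hpos
      have := hbwd δ hδS 0 hH0
      exact lt_asymm hδγ (sub_pos.mp this)
    · push_neg at hpos
      obtain ⟨h1, hh1, hγh1⟩ := hpos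
      have hneg : ∀ h ∈ H, h < -γ := by
        intro h hh
        by_contra hc
        push_neg at hc
        exact hγ (hHconv (-h) (hHneg h hh) h1 hh1 γ (neg_le.mp hc) hγh1)
      obtain ⟨δ, hδS, hδγ, -⟩ := hnosmallest (-γ) hneg
      have := hfwd δ hδS 0 hH0
      exact lt_asymm hδγ (neg_lt_iff_pos_add.mpr (add_comm δ γ ▸ this))
  · intro hγH
    ext β
    simp only [Set.mem_image, Set.mem_setOf_eq]
    constructor
    · rintro ⟨α, hα, rfl⟩
      intro h hh
      have : h + -γ ∈ H := hHadd h hh (-γ) (hHneg γ hγH)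
      have := hα _ this
      exact sub_lt_iff_lt_add.mp (by rwa [← sub_eq_add_neg] at this)
    · intro hβ
      refine ⟨β - γ, fun h hh => ?_, sub_add_cancel β γ⟩
      have : h + γ ∈ H := hHadd h hh γ hγH
      have := hβ _ this
      exact lt_sub_iff_add_lt.mpr this
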